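/- The coefficient b := ∫ ⟨∇ψ(x), ∇h_α(x)⟩ π(dx) admits the sensitivity-process representation b = Σ_{t=0}^∞ α^t ∫ 𝔼[ ⟨∇ψ(x), S_t(x, ·)ᵀ ∇c(F_t(x, ·))⟩ ] π(dx), where both the integral on the left and the series on the right converge absolutely. -/

import Mathlib

open MeasureTheory

/-- The random flow driven by noise `N`: `rflow a N 0 x ω = x`,
`rflow a N (s+1) x ω = a (rflow a N s x ω) (N (s+1) ω)`. -/
def rflow {E M Ω : Type*} (a : E → M → E) (N : ℕ → Ω → M) : ℕ → E → Ω → E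
  | 0 => fun x _ => x
  | s + 1 => fun x ω => a (rflow a N s x ω) (N (s + 1) ω)

section helpers

variable {Ω : Type*} [MeasurableSpace Ω] {d m : ℕ}
  {N : ℕ → Ω → Fin m → ℝ}
  {a : EuclideanSpace ℝ (Fin d) → (Fin m → ℝ) → EuclideanSpace ℝ (Fin d)} {L : ℝ}

lemma rflow_contDiff (haC1 : ∀ n, ContDiff ℝ 1 fun x => a x n) (t : ℕ) (ω : Ω) :
    ContDiff ℝ 1 (fun x : EuclideanSpace ℝ (Fin d) => rflow a N t x ω) := by
  induction t with
  | zero =>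
    have h0 : (fun x : EuclideanSpace ℝ (Fin d) => rflow a N 0 x ω) = id := rfl
    rw [h0]; exact contDiff_id
  | succ t ih => exact (haC1 (N (t + 1) ω)).comp ih

lemma rflow_fderiv_succ (haC1 : ∀ n, ContDiff ℝ 1 fun x => a x n) (t : ℕ) (ω : Ω)
    (x : EuclideanSpace ℝ (Fin d)) :
    fderiv ℝ (fun y => rflow a N (t + 1) y ω) x
      = (fderiv ℝ (fun y => a y (N (t + 1) ω)) (rflow a N t x ω)).comp
          (fderiv ℝ (fun y => rflow a N t y ω) x) := by
  have h1 : DifferentiableAt ℝ (fun y : EuclideanSpace ℝ (Fin d) => rflow a N t y ω) x :=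
    ((rflow_contDiff haC1 t ω).differentiable one_ne_zero).differentiableAt
  have h2 : DifferentiableAt ℝ (fun y : EuclideanSpace ℝ (Fin d) => a y (N (t + 1) ω))
      (rflow a N t x ω) :=
    ((haC1 (N (t + 1) ω)).differentiable one_ne_zero).differentiableAt
  exact fderiv_comp x h2 h1

lemma norm_fderiv_rflow_le (haC1 : ∀ n, ContDiff ℝ 1 fun x => a x n)
    (hL : ∀ (x : EuclideanSpace ℝ (Fin d)) (n : Fin m → ℝ),
      ‖fderiv ℝ (fun y => a y n) x‖ ≤ L) (t : ℕ) (ω : Ω) (x : EuclideanSpace ℝ (Fin d)) :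
    ‖fderiv ℝ (fun y => rflow a N t y ω) x‖ ≤ L ^ t := by
  induction t with
  | zero =>
    have h0 : (fun y : EuclideanSpace ℝ (Fin d) => rflow a N 0 y ω) = id := rfl
    rw [h0, fderiv_id, pow_zero]
    exact ContinuousLinearMap.norm_id_le
  | succ t ih =>
    rw [rflow_fderiv_succ haC1 t ω x, pow_succ]
    calc ‖_‖ ≤ ‖fderiv ℝ (fun y => a y (N (t + 1) ω)) (rflow a N t x ω)‖ *
        ‖fderiv ℝ (fun y => rflow a N t y ω) x‖ := ContinuousLinearMap.opNorm_comp_le _ _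
      _ ≤ L * L ^ t :=
        mul_le_mul (hL _ _) ih (norm_nonneg _) ((norm_nonneg _).trans (hL x (N (t + 1) ω)))
      _ = L ^ t * L := mul_comm _ _

lemma measurable_rflow
    (hameas : Measurable fun p : EuclideanSpace ℝ (Fin d) × (Fin m → ℝ) => a p.1 p.2)
    (hN : ∀ s, Measurable (N s)) (t : ℕ) (x : EuclideanSpace ℝ (Fin d)) :
    Measurable fun ω => rflow a N t x ω := by
  induction t with
  | zero => exact measurable_const
  | succ t ih => exact hameas.comp (ih.prodMk (hN (t + 1)))

lemma measurable_fderiv_rflow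
    (hameas : Measurable fun p : EuclideanSpace ℝ (Fin d) × (Fin m → ℝ) => a p.1 p.2)
    (hDmeas : Measurable fun p : EuclideanSpace ℝ (Fin d) × (Fin m → ℝ) =>
      fderiv ℝ (fun x => a x p.2) p.1)
    (hN : ∀ s, Measurable (N s)) (haC1 : ∀ n, ContDiff ℝ 1 fun x => a x n) (t : ℕ)
    (x : EuclideanSpace ℝ (Fin d)) :
    Measurable fun ω => fderiv ℝ (fun y => rflow a N t y ω) x := by
  induction t with
  | zero =>
    have h0 : (fun ω : Ω => fderiv ℝ (fun y => rflow a N 0 y ω) x)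
        = fun _ => ContinuousLinearMap.id ℝ (EuclideanSpace ℝ (Fin d)) := by
      funext ω
      have h1 : (fun y : EuclideanSpace ℝ (Fin d) => rflow a N 0 y ω) = id := rfl
      rw [h1, fderiv_id]
    rw [h0]; exact measurable_const
  | succ t ih =>
    have heq : (fun ω => fderiv ℝ (fun y => rflow a N (t + 1) y ω) x)
        = fun ω => (fderiv ℝ (fun y => a y (N (t + 1) ω)) (rflow a N t x ω)).comp
            (fderiv ℝ (fun y => rflow a N t y ω) x) := by
      funext ω; exact rflow_fderiv_succ haC1 t ω x
    rw [heq]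
    have h1 : Measurable fun ω => fderiv ℝ (fun y => a y (N (t + 1) ω)) (rflow a N t x ω) :=
      hDmeas.comp ((measurable_rflow hameas hN t x).prodMk (hN (t + 1)))
    exact ((isBoundedBilinearMap_comp
      (𝕜 := ℝ) (E := EuclideanSpace ℝ (Fin d)) (F := EuclideanSpace ℝ (Fin d))
      (G := EuclideanSpace ℝ (Fin d))).continuous.measurable).comp (h1.prodMk ih)

lemma continuous_fderiv_rflow (haC1 : ∀ n, ContDiff ℝ 1 fun x => a x n) (t : ℕ) (ω : Ω) :
    Continuous fun x : EuclideanSpace ℝ (Fin d) => fderiv ℝ (fun y => rflow a N t y ω) x :=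
  (contDiff_one_iff_fderiv.mp (rflow_contDiff haC1 t ω)).2

end helpers

section param

open InnerProductSpace

variable {Ω : Type*} [MeasurableSpace Ω] {d m : ℕ}
  {N : ℕ → Ω → Fin m → ℝ}
  {a : EuclideanSpace ℝ (Fin d) → (Fin m → ℝ) → EuclideanSpace ℝ (Fin d)} {L : ℝ}
  {c : EuclideanSpace ℝ (Fin d) → ℝ} {B C : ℝ}

lemma norm_fderiv_eq_norm_gradient (f : EuclideanSpace ℝ (Fin d) → ℝ)
    (y : EuclideanSpace ℝ (Fin d)) : ‖fderiv ℝ f y‖ = ‖gradient f y‖ :=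
  ((toDual ℝ (EuclideanSpace ℝ (Fin d))).symm.norm_map (fderiv ℝ f y)).symm

lemma measurable_Fprime
    (hameas : Measurable fun p : EuclideanSpace ℝ (Fin d) × (Fin m → ℝ) => a p.1 p.2)
    (hDmeas : Measurable fun p : EuclideanSpace ℝ (Fin d) × (Fin m → ℝ) =>
      fderiv ℝ (fun x => a x p.2) p.1)
    (hN : ∀ s, Measurable (N s)) (haC1 : ∀ n, ContDiff ℝ 1 fun x => a x n)
    (hc : ContDiff ℝ 1 c) (t : ℕ) (x : EuclideanSpace ℝ (Fin d)) :
    Measurable fun ω =>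
      (fderiv ℝ c (rflow a N t x ω)).comp (fderiv ℝ (fun y => rflow a N t y ω) x) := by
  have h1 : Measurable fun ω => fderiv ℝ c (rflow a N t x ω) :=
    ((contDiff_one_iff_fderiv.mp hc).2.measurable).comp (measurable_rflow hameas hN t x)
  exact ((isBoundedBilinearMap_comp
    (𝕜 := ℝ) (E := EuclideanSpace ℝ (Fin d)) (F := EuclideanSpace ℝ (Fin d))
    (G := ℝ)).continuous.measurable).comp
      (h1.prodMk (measurable_fderiv_rflow hameas hDmeas hN haC1 t x))

lemma norm_Fprime_le
    (haC1 : ∀ n, ContDiff ℝ 1 fun x => a x n)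
    (hL : ∀ (x : EuclideanSpace ℝ (Fin d)) (n : Fin m → ℝ),
      ‖fderiv ℝ (fun y => a y n) x‖ ≤ L)
    (hcC : ∀ y, ‖gradient c y‖ ≤ C) (t : ℕ) (ω : Ω) (x : EuclideanSpace ℝ (Fin d)) :
    ‖(fderiv ℝ c (rflow a N t x ω)).comp (fderiv ℝ (fun y => rflow a N t y ω) x)‖
      ≤ C * L ^ t := by
  have hC0 : (0:ℝ) ≤ C := (norm_nonneg _).trans (hcC 0)
  calc ‖_‖ ≤ ‖fderiv ℝ c (rflow a N t x ω)‖ * ‖fderiv ℝ (fun y => rflow a N t y ω) x‖ :=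
        ContinuousLinearMap.opNorm_comp_le _ _
    _ ≤ C * L ^ t := by
        apply mul_le_mul _ (norm_fderiv_rflow_le haC1 hL t ω x) (norm_nonneg _) hC0
        rw [norm_fderiv_eq_norm_gradient]; exact hcC _

lemma hasFDerivAt_expectation (ℙ : Measure Ω) [IsProbabilityMeasure ℙ]
    (hameas : Measurable fun p : EuclideanSpace ℝ (Fin d) × (Fin m → ℝ) => a p.1 p.2)
    (hDmeas : Measurable fun p : EuclideanSpace ℝ (Fin d) × (Fin m → ℝ) =>
      fderiv ℝ (fun x => a x p.2) p.1)
    (hN : ∀ s, Measurable (N s)) (haC1 : ∀ n, ContDiff ℝ 1 fun x => a x n)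
    (hL : ∀ (x : EuclideanSpace ℝ (Fin d)) (n : Fin m → ℝ),
      ‖fderiv ℝ (fun y => a y n) x‖ ≤ L)
    (hc : ContDiff ℝ 1 c) (hcB : ∀ y, |c y| ≤ B) (hcC : ∀ y, ‖gradient c y‖ ≤ C)
    (t : ℕ) (x₀ : EuclideanSpace ℝ (Fin d)) :
    HasFDerivAt (fun x => ∫ ω, c (rflow a N t x ω) ∂ℙ)
      (∫ ω, (fderiv ℝ c (rflow a N t x₀ ω)).comp
        (fderiv ℝ (fun y => rflow a N t y ω) x₀) ∂ℙ) x₀ := by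
  apply hasFDerivAt_integral_of_dominated_of_fderiv_le (𝕜 := ℝ)
    (F := fun x ω => c (rflow a N t x ω))
    (F' := fun x ω => (fderiv ℝ c (rflow a N t x ω)).comp
        (fderiv ℝ (fun y => rflow a N t y ω) x))
    (bound := fun _ => C * L ^ t) (s := Metric.ball x₀ 1) (Metric.ball_mem_nhds x₀ one_pos)
  · exact Filter.Eventually.of_forall fun x =>
      ((hc.continuous.measurable.comp (measurable_rflow hameas hN t x)).aestronglyMeasurable)
  · refine ⟨(hc.continuous.measurable.comp
      (measurable_rflow hameas hN t x₀)).aestronglyMeasurable, ?_⟩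
    exact HasFiniteIntegral.of_bounded (C := B)
      (Filter.Eventually.of_forall fun ω => by simpa [Real.norm_eq_abs] using hcB _)
  · exact (measurable_Fprime hameas hDmeas hN haC1 hc t x₀).aestronglyMeasurable
  · exact Filter.Eventually.of_forall fun ω x _ => norm_Fprime_le haC1 hL hcC t ω x
  · exact integrable_const _
  · refine Filter.Eventually.of_forall fun ω x _ => ?_
    exact (((hc.differentiable one_ne_zero).differentiableAt).hasFDerivAt).comp x
      (((rflow_contDiff haC1 t ω).differentiable one_ne_zero).differentiableAt).hasFDerivAt

end param

section main

open InnerProductSpace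

variable {Ω : Type*} [MeasurableSpace Ω] {d m : ℕ}
  {N : ℕ → Ω → Fin m → ℝ}
  {a : EuclideanSpace ℝ (Fin d) → (Fin m → ℝ) → EuclideanSpace ℝ (Fin d)} {L : ℝ}
  {c : EuclideanSpace ℝ (Fin d) → ℝ} {B C α : ℝ}

/-- The derivative of one term of the series. -/
lemma hasFDerivAt_g (ℙ : Measure Ω) [IsProbabilityMeasure ℙ]
    (hameas : Measurable fun p : EuclideanSpace ℝ (Fin d) × (Fin m → ℝ) => a p.1 p.2)
    (hDmeas : Measurable fun p : EuclideanSpace ℝ (Fin d) × (Fin m → ℝ) =>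
      fderiv ℝ (fun x => a x p.2) p.1)
    (hN : ∀ s, Measurable (N s)) (haC1 : ∀ n, ContDiff ℝ 1 fun x => a x n)
    (hL : ∀ (x : EuclideanSpace ℝ (Fin d)) (n : Fin m → ℝ),
      ‖fderiv ℝ (fun y => a y n) x‖ ≤ L)
    (hc : ContDiff ℝ 1 c) (hcB : ∀ y, |c y| ≤ B) (hcC : ∀ y, ‖gradient c y‖ ≤ C)
    (t : ℕ) (x₀ : EuclideanSpace ℝ (Fin d)) :
    HasFDerivAt (fun x => α ^ t * ∫ ω, c (rflow a N t x ω) ∂ℙ)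
      (α ^ t • ∫ ω, (fderiv ℝ c (rflow a N t x₀ ω)).comp
        (fderiv ℝ (fun y => rflow a N t y ω) x₀) ∂ℙ) x₀ :=
  (hasFDerivAt_expectation ℙ hameas hDmeas hN haC1 hL hc hcB hcC t x₀).const_mul _

lemma integrable_Fprime (ℙ : Measure Ω) [IsProbabilityMeasure ℙ]
    (hameas : Measurable fun p : EuclideanSpace ℝ (Fin d) × (Fin m → ℝ) => a p.1 p.2)
    (hDmeas : Measurable fun p : EuclideanSpace ℝ (Fin d) × (Fin m → ℝ) =>
      fderiv ℝ (fun x => a x p.2) p.1)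
    (hN : ∀ s, Measurable (N s)) (haC1 : ∀ n, ContDiff ℝ 1 fun x => a x n)
    (hL : ∀ (x : EuclideanSpace ℝ (Fin d)) (n : Fin m → ℝ),
      ‖fderiv ℝ (fun y => a y n) x‖ ≤ L)
    (hc : ContDiff ℝ 1 c) (hcC : ∀ y, ‖gradient c y‖ ≤ C)
    (t : ℕ) (x : EuclideanSpace ℝ (Fin d)) :
    Integrable (fun ω => (fderiv ℝ c (rflow a N t x ω)).comp
      (fderiv ℝ (fun y => rflow a N t y ω) x)) ℙ := by
  refine ⟨(measurable_Fprime hameas hDmeas hN haC1 hc t x).aestronglyMeasurable, ?_⟩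
  exact HasFiniteIntegral.of_bounded (C := C * L ^ t)
    (Filter.Eventually.of_forall fun ω => norm_Fprime_le haC1 hL hcC t ω x)

lemma norm_G_le (ℙ : Measure Ω) [IsProbabilityMeasure ℙ]
    (haC1 : ∀ n, ContDiff ℝ 1 fun x => a x n)
    (hL : ∀ (x : EuclideanSpace ℝ (Fin d)) (n : Fin m → ℝ),
      ‖fderiv ℝ (fun y => a y n) x‖ ≤ L)
    (hcC : ∀ y, ‖gradient c y‖ ≤ C) (hα0 : 0 ≤ α)
    (t : ℕ) (x : EuclideanSpace ℝ (Fin d)) :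
    ‖α ^ t • ∫ ω, (fderiv ℝ c (rflow a N t x ω)).comp
      (fderiv ℝ (fun y => rflow a N t y ω) x) ∂ℙ‖ ≤ C * (α * L) ^ t := by
  have h1 : ‖∫ ω, (fderiv ℝ c (rflow a N t x ω)).comp
      (fderiv ℝ (fun y => rflow a N t y ω) x) ∂ℙ‖ ≤ (C * L ^ t) * (ℙ Set.univ).toReal :=
    norm_integral_le_of_norm_le_const
      (Filter.Eventually.of_forall fun ω => norm_Fprime_le haC1 hL hcC t ω x)
  rw [measure_univ, ENNReal.toReal_one, mul_one] at h1
  rw [norm_smul, Real.norm_eq_abs, abs_pow, abs_of_nonneg hα0, mul_pow]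
  calc α ^ t * ‖_‖ ≤ α ^ t * (C * L ^ t) := mul_le_mul_of_nonneg_left h1 (pow_nonneg hα0 t)
    _ = C * (α ^ t * L ^ t) := by ring

lemma abs_g_le (ℙ : Measure Ω) [IsProbabilityMeasure ℙ]
    (hameas : Measurable fun p : EuclideanSpace ℝ (Fin d) × (Fin m → ℝ) => a p.1 p.2)
    (hN : ∀ s, Measurable (N s))
    (hc : ContDiff ℝ 1 c) (hcB : ∀ y, |c y| ≤ B) (hα0 : 0 ≤ α)
    (t : ℕ) (x : EuclideanSpace ℝ (Fin d)) :
    ‖α ^ t * ∫ ω, c (rflow a N t x ω) ∂ℙ‖ ≤ B * α ^ t := by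
  have h1 : ‖∫ ω, c (rflow a N t x ω) ∂ℙ‖ ≤ B * (ℙ Set.univ).toReal :=
    norm_integral_le_of_norm_le_const
      (Filter.Eventually.of_forall fun ω => by simpa [Real.norm_eq_abs] using hcB _)
  rw [measure_univ, ENNReal.toReal_one, mul_one] at h1
  rw [Real.norm_eq_abs, abs_mul, abs_pow, abs_of_nonneg hα0, mul_comm]
  exact mul_le_mul_of_nonneg_right h1 (pow_nonneg hα0 t)

end main

section main2

open InnerProductSpace

variable {Ω : Type*} [MeasurableSpace Ω] {d m : ℕ}
  {N : ℕ → Ω → Fin m → ℝ}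
  {a : EuclideanSpace ℝ (Fin d) → (Fin m → ℝ) → EuclideanSpace ℝ (Fin d)} {L : ℝ}
  {c : EuclideanSpace ℝ (Fin d) → ℝ} {B C α : ℝ}
  (ℙ : Measure Ω) [IsProbabilityMeasure ℙ]
  (hameas : Measurable fun p : EuclideanSpace ℝ (Fin d) × (Fin m → ℝ) => a p.1 p.2)
  (hDmeas : Measurable fun p : EuclideanSpace ℝ (Fin d) × (Fin m → ℝ) =>
    fderiv ℝ (fun x => a x p.2) p.1)
  (hN : ∀ s, Measurable (N s)) (haC1 : ∀ n, ContDiff ℝ 1 fun x => a x n)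
  (hL : ∀ (x : EuclideanSpace ℝ (Fin d)) (n : Fin m → ℝ),
    ‖fderiv ℝ (fun y => a y n) x‖ ≤ L)
  (hc : ContDiff ℝ 1 c) (hcB : ∀ y, |c y| ≤ B) (hcC : ∀ y, ‖gradient c y‖ ≤ C)
  (hα : α ∈ Set.Ioo (0 : ℝ) 1) (hαL : α * L < 1)

include ℙ hameas hDmeas hN haC1 hL hc hcB hcC hα hαL

lemma hasFDerivAt_h (x : EuclideanSpace ℝ (Fin d)) :
    HasFDerivAt (fun x => ∑' t : ℕ, α ^ t * ∫ ω, c (rflow a N t x ω) ∂ℙ)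
      (∑' t : ℕ, α ^ t • ∫ ω, (fderiv ℝ c (rflow a N t x ω)).comp
        (fderiv ℝ (fun y => rflow a N t y ω) x) ∂ℙ) x := by
  have hL0 : (0:ℝ) ≤ L := (norm_nonneg _).trans (hL 0 0)
  have hu : Summable fun t : ℕ => C * (α * L) ^ t :=
    (summable_geometric_of_lt_one (mul_nonneg hα.1.le hL0) hαL).mul_left C
  refine hasFDerivAt_tsum (x₀ := x) hu
    (fun t x => hasFDerivAt_g ℙ hameas hDmeas hN haC1 hL hc hcB hcC t x)
    (fun t x => norm_G_le ℙ haC1 hL hcC hα.1.le t x) ?_ x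
  exact Summable.of_norm_bounded
    ((summable_geometric_of_lt_one hα.1.le hα.2).mul_left B)
    (fun t => abs_g_le ℙ hameas hN hc hcB hα.1.le t x)

lemma gradient_h (x : EuclideanSpace ℝ (Fin d)) :
    gradient (fun x => ∑' t : ℕ, α ^ t * ∫ ω, c (rflow a N t x ω) ∂ℙ) x
      = (toDual ℝ (EuclideanSpace ℝ (Fin d))).symm
          (∑' t : ℕ, α ^ t • ∫ ω, (fderiv ℝ c (rflow a N t x ω)).comp
            (fderiv ℝ (fun y => rflow a N t y ω) x) ∂ℙ) := by
  rw [gradient, (hasFDerivAt_h ℙ hameas hDmeas hN haC1 hL hc hcB hcC hα hαL x).fderiv]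

/-- One term: `α^t * E[⟪∇ψ x, S_tᵀ ∇c(F_t)⟫] = (G t x) (∇ψ x)`. -/
lemma term_eq (t : ℕ) (x v : EuclideanSpace ℝ (Fin d)) :
    α ^ t * ∫ ω, (inner ℝ v (ContinuousLinearMap.adjoint
        (fderiv ℝ (fun y => rflow a N t y ω) x) (gradient c (rflow a N t x ω))) : ℝ) ∂ℙ
      = (α ^ t • ∫ ω, (fderiv ℝ c (rflow a N t x ω)).comp
          (fderiv ℝ (fun y => rflow a N t y ω) x) ∂ℙ) v := by
  rw [ContinuousLinearMap.smul_apply,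
    ContinuousLinearMap.integral_apply (integrable_Fprime ℙ hameas hDmeas hN haC1 hL hc hcC t x),
    smul_eq_mul]
  congr 1
  refine integral_congr_ae (Filter.Eventually.of_forall fun ω => ?_)
  have h1 : ∀ u : EuclideanSpace ℝ (Fin d), (fderiv ℝ c (rflow a N t x ω)) u
      = (inner ℝ (gradient c (rflow a N t x ω)) u : ℝ) := fun u => by
    rw [gradient, toDual_symm_apply]
  show (inner ℝ v ((ContinuousLinearMap.adjoint (fderiv ℝ (fun y => rflow a N t y ω) x))
      (gradient c (rflow a N t x ω))) : ℝ)
    = ((fderiv ℝ c (rflow a N t x ω)).comp (fderiv ℝ (fun y => rflow a N t y ω) x)) v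
  rw [ContinuousLinearMap.comp_apply, h1, real_inner_comm,
    ContinuousLinearMap.adjoint_inner_left]


end main2

section main3

open InnerProductSpace

variable {Ω : Type*} [MeasurableSpace Ω] {d m : ℕ}
  {N : ℕ → Ω → Fin m → ℝ}
  {a : EuclideanSpace ℝ (Fin d) → (Fin m → ℝ) → EuclideanSpace ℝ (Fin d)} {L : ℝ}
  {c : EuclideanSpace ℝ (Fin d) → ℝ} {B C α : ℝ}

lemma continuous_gradient {f : EuclideanSpace ℝ (Fin d) → ℝ} (hf : ContDiff ℝ 1 f) :
    Continuous (gradient f) := by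
  have h : gradient f = fun x => (toDual ℝ (EuclideanSpace ℝ (Fin d))).symm (fderiv ℝ f x) :=
    funext fun x => by rw [gradient]
  rw [h]
  exact (toDual ℝ (EuclideanSpace ℝ (Fin d))).symm.continuous.comp
    (contDiff_one_iff_fderiv.mp hf).2

variable (ℙ : Measure Ω) [IsProbabilityMeasure ℙ]
  (hameas : Measurable fun p : EuclideanSpace ℝ (Fin d) × (Fin m → ℝ) => a p.1 p.2)
  (hDmeas : Measurable fun p : EuclideanSpace ℝ (Fin d) × (Fin m → ℝ) =>
    fderiv ℝ (fun x => a x p.2) p.1)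
  (hN : ∀ s, Measurable (N s)) (haC1 : ∀ n, ContDiff ℝ 1 fun x => a x n)
  (hL : ∀ (x : EuclideanSpace ℝ (Fin d)) (n : Fin m → ℝ),
    ‖fderiv ℝ (fun y => a y n) x‖ ≤ L)
  (hc : ContDiff ℝ 1 c) (hcB : ∀ y, |c y| ≤ B) (hcC : ∀ y, ‖gradient c y‖ ≤ C)
  (hα : α ∈ Set.Ioo (0 : ℝ) 1) (hαL : α * L < 1)

include ℙ hameas hDmeas hN haC1 hL hc hcC

lemma continuous_G (t : ℕ) :
    Continuous fun x => α ^ t • ∫ ω, (fderiv ℝ c (rflow a N t x ω)).comp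
      (fderiv ℝ (fun y => rflow a N t y ω) x) ∂ℙ := by
  refine Continuous.fun_const_smul ?_ _
  refine continuous_of_dominated (bound := fun _ => C * L ^ t)
    (fun x => (measurable_Fprime hameas hDmeas hN haC1 hc t x).aestronglyMeasurable)
    (fun x => Filter.Eventually.of_forall fun ω => norm_Fprime_le haC1 hL hcC t ω x)
    (integrable_const _) ?_
  refine Filter.Eventually.of_forall fun ω => ?_
  exact (isBoundedBilinearMap_comp
    (𝕜 := ℝ) (E := EuclideanSpace ℝ (Fin d)) (F := EuclideanSpace ℝ (Fin d))
    (G := ℝ)).continuous.comp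
    (((((contDiff_one_iff_fderiv.mp hc).2).comp
      (rflow_contDiff haC1 t ω).continuous)).prodMk (continuous_fderiv_rflow haC1 t ω))

include hcB hα hαL

lemma inner_gradient_h (ψ : EuclideanSpace ℝ (Fin d) → ℝ) (x : EuclideanSpace ℝ (Fin d)) :
    (inner ℝ (gradient ψ x)
        (gradient (fun x => ∑' t : ℕ, α ^ t * ∫ ω, c (rflow a N t x ω) ∂ℙ) x) : ℝ)
      = ∑' t : ℕ, α ^ t * ∫ ω, (inner ℝ (gradient ψ x) (ContinuousLinearMap.adjoint
          (fderiv ℝ (fun y => rflow a N t y ω) x) (gradient c (rflow a N t x ω))) : ℝ) ∂ℙ := by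
  have hL0 : (0:ℝ) ≤ L := (norm_nonneg _).trans (hL 0 0)
  have hu : Summable fun t : ℕ => C * (α * L) ^ t :=
    (summable_geometric_of_lt_one (mul_nonneg hα.1.le hL0) hαL).mul_left C
  have hs : Summable fun t : ℕ => α ^ t • ∫ ω, (fderiv ℝ c (rflow a N t x ω)).comp
      (fderiv ℝ (fun y => rflow a N t y ω) x) ∂ℙ :=
    Summable.of_norm_bounded hu (fun t => norm_G_le ℙ haC1 hL hcC hα.1.le t x)
  rw [gradient_h ℙ hameas hDmeas hN haC1 hL hc hcB hcC hα hαL x, real_inner_comm,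
    toDual_symm_apply]
  calc (∑' t : ℕ, α ^ t • ∫ ω, (fderiv ℝ c (rflow a N t x ω)).comp
        (fderiv ℝ (fun y => rflow a N t y ω) x) ∂ℙ) (gradient ψ x)
      = ∑' t : ℕ, (α ^ t • ∫ ω, (fderiv ℝ c (rflow a N t x ω)).comp
          (fderiv ℝ (fun y => rflow a N t y ω) x) ∂ℙ) (gradient ψ x) :=
        (ContinuousLinearMap.apply ℝ ℝ (gradient ψ x)).map_tsum hs
    _ = _ := tsum_congr fun t =>
        (term_eq ℙ hameas hDmeas hN haC1 hL hc hcB hcC hα hαL t x (gradient ψ x)).symm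

end main3

section main4

open InnerProductSpace

variable {Ω : Type*} [MeasurableSpace Ω] {d m : ℕ}
  {N : ℕ → Ω → Fin m → ℝ}
  {a : EuclideanSpace ℝ (Fin d) → (Fin m → ℝ) → EuclideanSpace ℝ (Fin d)} {L : ℝ}
  {c ψ : EuclideanSpace ℝ (Fin d) → ℝ} {B C C' α : ℝ}
  (ℙ : Measure Ω) [IsProbabilityMeasure ℙ]
  (hameas : Measurable fun p : EuclideanSpace ℝ (Fin d) × (Fin m → ℝ) => a p.1 p.2)
  (hDmeas : Measurable fun p : EuclideanSpace ℝ (Fin d) × (Fin m → ℝ) =>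
    fderiv ℝ (fun x => a x p.2) p.1)
  (hN : ∀ s, Measurable (N s)) (haC1 : ∀ n, ContDiff ℝ 1 fun x => a x n)
  (hL : ∀ (x : EuclideanSpace ℝ (Fin d)) (n : Fin m → ℝ),
    ‖fderiv ℝ (fun y => a y n) x‖ ≤ L)
  (hc : ContDiff ℝ 1 c) (hcB : ∀ y, |c y| ≤ B) (hcC : ∀ y, ‖gradient c y‖ ≤ C)
  (hα : α ∈ Set.Ioo (0 : ℝ) 1) (hαL : α * L < 1)
  (hψ : ContDiff ℝ 1 ψ) (hψC : ∀ y, ‖gradient ψ y‖ ≤ C')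

include ℙ hameas hDmeas hN haC1 hL hc hcB hcC hα hαL hψC

lemma abs_w_le (t : ℕ) (x : EuclideanSpace ℝ (Fin d)) :
    |α ^ t * ∫ ω, (inner ℝ (gradient ψ x) (ContinuousLinearMap.adjoint
        (fderiv ℝ (fun y => rflow a N t y ω) x) (gradient c (rflow a N t x ω))) : ℝ) ∂ℙ|
      ≤ (C' * C) * (α * L) ^ t := by
  have hC'0 : (0:ℝ) ≤ C' := (norm_nonneg _).trans (hψC 0)
  rw [term_eq ℙ hameas hDmeas hN haC1 hL hc hcB hcC hα hαL t x (gradient ψ x),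
    ← Real.norm_eq_abs]
  calc ‖(α ^ t • ∫ ω, (fderiv ℝ c (rflow a N t x ω)).comp
        (fderiv ℝ (fun y => rflow a N t y ω) x) ∂ℙ) (gradient ψ x)‖
      ≤ ‖α ^ t • ∫ ω, (fderiv ℝ c (rflow a N t x ω)).comp
          (fderiv ℝ (fun y => rflow a N t y ω) x) ∂ℙ‖ * ‖gradient ψ x‖ :=
        ContinuousLinearMap.le_opNorm _ _
    _ ≤ (C * (α * L) ^ t) * C' := by
        refine mul_le_mul (norm_G_le ℙ haC1 hL hcC hα.1.le t x) (hψC x) (norm_nonneg _) ?_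
        have hL0 : (0:ℝ) ≤ L := (norm_nonneg _).trans (hL 0 0)
        have hC0 : (0:ℝ) ≤ C := (norm_nonneg _).trans (hcC 0)
        exact mul_nonneg hC0 (pow_nonneg (mul_nonneg hα.1.le hL0) t)
    _ = (C' * C) * (α * L) ^ t := by ring

include hψ

lemma continuous_w (t : ℕ) :
    Continuous fun x => α ^ t * ∫ ω, (inner ℝ (gradient ψ x) (ContinuousLinearMap.adjoint
      (fderiv ℝ (fun y => rflow a N t y ω) x) (gradient c (rflow a N t x ω))) : ℝ) ∂ℙ := by
  have h : (fun x => α ^ t * ∫ ω, (inner ℝ (gradient ψ x) (ContinuousLinearMap.adjoint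
        (fderiv ℝ (fun y => rflow a N t y ω) x) (gradient c (rflow a N t x ω))) : ℝ) ∂ℙ)
      = fun x => (α ^ t • ∫ ω, (fderiv ℝ c (rflow a N t x ω)).comp
          (fderiv ℝ (fun y => rflow a N t y ω) x) ∂ℙ) (gradient ψ x) :=
    funext fun x => term_eq ℙ hameas hDmeas hN haC1 hL hc hcB hcC hα hαL t x (gradient ψ x)
  rw [h]
  exact (isBoundedBilinearMap_apply
    (𝕜 := ℝ) (E := EuclideanSpace ℝ (Fin d)) (F := ℝ)).continuous.comp
    ((continuous_G ℙ hameas hDmeas hN haC1 hL hc hcC t).prodMk (continuous_gradient hψ))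

end main4


open InnerProductSpace in
/-- The coefficient `b = ∫ ⟨∇ψ(x), ∇h_α(x)⟩ π(dx)` admits the
sensitivity-process representation
`b = ∑_t α^t ∫ 𝔼[⟨∇ψ(x), S_t(x,·)ᵀ ∇c(F_t(x,·))⟩] π(dx)`, where the integral on the left
and the series on the right converge absolutely. -/
theorem coefficient_b_sensitivity_representation
    {Ω : Type*} [MeasurableSpace Ω] (ℙ : Measure Ω) [IsProbabilityMeasure ℙ]
    (d m : ℕ)
    (N : ℕ → Ω → Fin m → ℝ) (hN : ∀ s, Measurable (N s))
    (L : ℝ)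
    (a : EuclideanSpace ℝ (Fin d) → (Fin m → ℝ) → EuclideanSpace ℝ (Fin d))
    (hameas : Measurable fun p : EuclideanSpace ℝ (Fin d) × (Fin m → ℝ) => a p.1 p.2)
    (haC1 : ∀ n, ContDiff ℝ 1 (fun x => a x n))
    (hDmeas : Measurable fun p : EuclideanSpace ℝ (Fin d) × (Fin m → ℝ) =>
      fderiv ℝ (fun x => a x p.2) p.1)
    (hL : ∀ x n, ‖fderiv ℝ (fun y => a y n) x‖ ≤ L)
    (c : EuclideanSpace ℝ (Fin d) → ℝ) (hc : ContDiff ℝ 1 c)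
    (B : ℝ) (hcB : ∀ y, |c y| ≤ B)
    (C : ℝ) (hcC : ∀ y, ‖gradient c y‖ ≤ C)
    (α : ℝ) (hα : α ∈ Set.Ioo (0 : ℝ) 1) (hαL : α * L < 1)
    (ψ : EuclideanSpace ℝ (Fin d) → ℝ) (hψ : ContDiff ℝ 1 ψ)
    (C' : ℝ) (hψC : ∀ y, ‖gradient ψ y‖ ≤ C')
    (π : Measure (EuclideanSpace ℝ (Fin d))) [IsProbabilityMeasure π] :
    Integrable (fun x => (inner ℝ (gradient ψ x)
        (gradient (fun x => ∑' t : ℕ, α ^ t * ∫ ω, c (rflow a N t x ω) ∂ℙ) x) : ℝ)) π ∧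
    Summable (fun t : ℕ => |α ^ t * ∫ x, ∫ ω, (inner ℝ (gradient ψ x)
        (ContinuousLinearMap.adjoint (fderiv ℝ (fun y => rflow a N t y ω) x)
          (gradient c (rflow a N t x ω))) : ℝ) ∂ℙ ∂π|) ∧
    (∫ x, (inner ℝ (gradient ψ x)
        (gradient (fun x => ∑' t : ℕ, α ^ t * ∫ ω, c (rflow a N t x ω) ∂ℙ) x) : ℝ) ∂π)
      = ∑' t : ℕ, α ^ t * ∫ x, ∫ ω, (inner ℝ (gradient ψ x)
          (ContinuousLinearMap.adjoint (fderiv ℝ (fun y => rflow a N t y ω) x)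
            (gradient c (rflow a N t x ω))) : ℝ) ∂ℙ ∂π := by
  have hL0 : (0:ℝ) ≤ L := (norm_nonneg _).trans (hL 0 0)
  have hC0 : (0:ℝ) ≤ C := (norm_nonneg _).trans (hcC 0)
  have hC'0 : (0:ℝ) ≤ C' := (norm_nonneg _).trans (hψC 0)
  have hr0 : (0:ℝ) ≤ α * L := mul_nonneg hα.1.le hL0
  have hgeo : Summable fun t : ℕ => (α * L) ^ t := summable_geometric_of_lt_one hr0 hαL
  have hu : Summable fun t : ℕ => C * (α * L) ^ t := hgeo.mul_left C
  -- the per-term functions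
  set w : ℕ → EuclideanSpace ℝ (Fin d) → ℝ := fun t x =>
    α ^ t * ∫ ω, (inner ℝ (gradient ψ x) (ContinuousLinearMap.adjoint
      (fderiv ℝ (fun y => rflow a N t y ω) x) (gradient c (rflow a N t x ω))) : ℝ) ∂ℙ with hw
  have habsw : ∀ t x, |w t x| ≤ (C' * C) * (α * L) ^ t := fun t x =>
    abs_w_le ℙ hameas hDmeas hN haC1 hL hc hcB hcC hα hαL hψC t x
  have hcontw : ∀ t, Continuous (w t) := fun t =>
    continuous_w ℙ hameas hDmeas hN haC1 hL hc hcB hcC hα hαL hψ hψC t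
  have hwint : ∀ t, Integrable (w t) π := fun t =>
    ⟨(hcontw t).aestronglyMeasurable, HasFiniteIntegral.of_bounded
      (Filter.Eventually.of_forall fun x => by
        rw [Real.norm_eq_abs]; exact habsw t x)⟩
  have hpt : ∀ x, (inner ℝ (gradient ψ x)
      (gradient (fun x => ∑' t : ℕ, α ^ t * ∫ ω, c (rflow a N t x ω) ∂ℙ) x) : ℝ)
      = ∑' t : ℕ, w t x := fun x =>
    inner_gradient_h ℙ hameas hDmeas hN haC1 hL hc hcB hcC hα hαL ψ x
  -- Part 1 : integrability
  have hcsum : Continuous fun x => ∑' t : ℕ, α ^ t • ∫ ω,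
      (fderiv ℝ c (rflow a N t x ω)).comp (fderiv ℝ (fun y => rflow a N t y ω) x) ∂ℙ :=
    continuous_tsum (fun t => continuous_G ℙ hameas hDmeas hN haC1 hL hc hcC t) hu
      (fun t x => norm_G_le ℙ haC1 hL hcC hα.1.le t x)
  have hgradh : Continuous fun x => gradient
      (fun x => ∑' t : ℕ, α ^ t * ∫ ω, c (rflow a N t x ω) ∂ℙ) x := by
    have h : (fun x => gradient
        (fun x => ∑' t : ℕ, α ^ t * ∫ ω, c (rflow a N t x ω) ∂ℙ) x)
        = fun x => (toDual ℝ (EuclideanSpace ℝ (Fin d))).symm (∑' t : ℕ, α ^ t • ∫ ω,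
            (fderiv ℝ c (rflow a N t x ω)).comp (fderiv ℝ (fun y => rflow a N t y ω) x) ∂ℙ) :=
      funext fun x => gradient_h ℙ hameas hDmeas hN haC1 hL hc hcB hcC hα hαL x
    rw [h]
    exact (toDual ℝ (EuclideanSpace ℝ (Fin d))).symm.continuous.comp hcsum
  have hfc : Continuous fun x => (inner ℝ (gradient ψ x)
      (gradient (fun x => ∑' t : ℕ, α ^ t * ∫ ω, c (rflow a N t x ω) ∂ℙ) x) : ℝ) :=
    (continuous_gradient hψ).inner hgradh
  have hnormgradh : ∀ x, ‖gradient
      (fun x => ∑' t : ℕ, α ^ t * ∫ ω, c (rflow a N t x ω) ∂ℙ) x‖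
      ≤ ∑' t : ℕ, C * (α * L) ^ t := by
    intro x
    rw [gradient_h ℙ hameas hDmeas hN haC1 hL hc hcB hcC hα hαL x,
      LinearIsometryEquiv.norm_map]
    exact tsum_of_norm_bounded hu.hasSum (fun t => norm_G_le ℙ haC1 hL hcC hα.1.le t x)
  have hint1 : Integrable (fun x => (inner ℝ (gradient ψ x)
      (gradient (fun x => ∑' t : ℕ, α ^ t * ∫ ω, c (rflow a N t x ω) ∂ℙ) x) : ℝ)) π := by
    refine ⟨hfc.aestronglyMeasurable, HasFiniteIntegral.of_bounded
      (C := C' * ∑' t : ℕ, C * (α * L) ^ t)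
      (Filter.Eventually.of_forall fun x => ?_)⟩
    calc ‖(inner ℝ (gradient ψ x) _ : ℝ)‖ ≤ ‖gradient ψ x‖ * ‖_‖ := norm_inner_le_norm _ _
      _ ≤ C' * ∑' t : ℕ, C * (α * L) ^ t :=
        mul_le_mul (hψC x) (hnormgradh x) (norm_nonneg _) hC'0
  -- Part 2 : summability
  have hterm : ∀ t : ℕ, |α ^ t * ∫ x, ∫ ω, (inner ℝ (gradient ψ x)
      (ContinuousLinearMap.adjoint (fderiv ℝ (fun y => rflow a N t y ω) x)
        (gradient c (rflow a N t x ω))) : ℝ) ∂ℙ ∂π| ≤ (C' * C) * (α * L) ^ t := by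
    intro t
    have h1 : α ^ t * ∫ x, ∫ ω, (inner ℝ (gradient ψ x)
        (ContinuousLinearMap.adjoint (fderiv ℝ (fun y => rflow a N t y ω) x)
          (gradient c (rflow a N t x ω))) : ℝ) ∂ℙ ∂π = ∫ x, w t x ∂π := by
      rw [hw]; exact (integral_const_mul _ _).symm
    rw [h1, ← Real.norm_eq_abs]
    have h2 := norm_integral_le_of_norm_le_const (μ := π) (f := w t)
      (C := (C' * C) * (α * L) ^ t)
      (Filter.Eventually.of_forall fun x => by rw [Real.norm_eq_abs]; exact habsw t x)
    simpa [measure_univ] using h2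
  have hsummable : Summable (fun t : ℕ => |α ^ t * ∫ x, ∫ ω, (inner ℝ (gradient ψ x)
      (ContinuousLinearMap.adjoint (fderiv ℝ (fun y => rflow a N t y ω) x)
        (gradient c (rflow a N t x ω))) : ℝ) ∂ℙ ∂π|) :=
    Summable.of_nonneg_of_le (fun t => abs_nonneg _) hterm (hgeo.mul_left (C' * C))
  -- Part 3 : the identity
  refine ⟨hint1, hsummable, ?_⟩
  have hsumnorm : Summable fun t : ℕ => ∫ x, ‖w t x‖ ∂π := by
    refine Summable.of_nonneg_of_le (fun t => integral_nonneg fun x => norm_nonneg _)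
      (fun t => ?_) (hgeo.mul_left (C' * C))
    refine le_trans (integral_mono ((hwint t).norm)
      (integrable_const ((C' * C) * (α * L) ^ t)) fun x => ?_) ?_
    · rw [Real.norm_eq_abs]; exact habsw t x
    · simp [measure_univ]
  calc (∫ x, (inner ℝ (gradient ψ x)
        (gradient (fun x => ∑' t : ℕ, α ^ t * ∫ ω, c (rflow a N t x ω) ∂ℙ) x) : ℝ) ∂π)
      = ∫ x, ∑' t : ℕ, w t x ∂π :=
        integral_congr_ae (Filter.Eventually.of_forall fun x => hpt x)
    _ = ∑' t : ℕ, ∫ x, w t x ∂π :=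
        (integral_tsum_of_summable_integral_norm hwint hsumnorm).symm
    _ = _ := tsum_congr fun t => by rw [hw]; exact integral_const_mul _ _
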